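/- Let D^n, D : ℝ^d → [0,∞) be depth functions with compact superlevel sets, α_max = max D, and D strictly monotone for P. Then pointwise Hausdorff convergence of the trimmed regions (δ_H(D_α^n, D_α) → 0 for every α ∈ (0,α_max)) is equivalent to compact Hausdorff convergence (sup_{α∈A} δ_H(D_α^n, D_α) → 0 for every compact interval A ⊂ (0,α_max)). -/
import Mathlib

open Filter Metric Set Topology

section Aux

variable {E : Type*} [MetricSpace E]

private lemma depth_right_cont (D : E → ℝ) (αmax : ℝ)
    (hD_cpt : ∀ α : ℝ, 0 < α → IsCompact {z | α ≤ D z})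
    (hmax : IsGreatest (Set.range D) αmax)
    (hsm : ∀ α : ℝ, 0 < α → α < αmax → {z | α ≤ D z} = closure {z | α < D z})
    (α : ℝ) (hα0 : 0 < α) (hαm : α < αmax) (ε : ℝ) (hε : 0 < ε) :
    ∃ β : ℝ, α < β ∧ β < αmax ∧ ∀ x ∈ {z | α ≤ D z}, infDist x {z | β ≤ D z} ≤ ε := by
  obtain ⟨z0, hz0⟩ := hmax.1
  have hz0' : D z0 = αmax := hz0
  -- index type: admissible increments
  let ι := {δ : ℝ // 0 < δ ∧ α + δ < αmax}
  let U : ι → Set E := fun i => {x | infDist x {z | α + i.1 ≤ D z} < ε}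
  have hUopen : ∀ i, IsOpen (U i) :=
    fun i => isOpen_lt (continuous_infDist_pt _) continuous_const
  have hcov : {z | α ≤ D z} ⊆ ⋃ i, U i := by
    intro x hx
    have hx' : x ∈ closure {z | α < D z} := by rw [← hsm α hα0 hαm]; exact hx
    obtain ⟨y, hy, hxy⟩ := Metric.mem_closure_iff.1 hx' ε hε
    have hyD : α < D y := hy
    have h1 : (0:ℝ) < min (D y - α) ((αmax - α) / 2) := by
      apply lt_min (by linarith) (by linarith)
    have h2 : α + min (D y - α) ((αmax - α) / 2) < αmax := by
      have := min_le_right (D y - α) ((αmax - α) / 2); linarith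
    refine mem_iUnion.2 ⟨⟨min (D y - α) ((αmax - α) / 2), h1, h2⟩, ?_⟩
    have hymem : y ∈ {z | α + min (D y - α) ((αmax - α) / 2) ≤ D z} := by
      have := min_le_left (D y - α) ((αmax - α) / 2)
      simp only [Set.mem_setOf_eq]; linarith
    exact lt_of_le_of_lt (infDist_le_dist_of_mem hymem) hxy
  obtain ⟨t, ht⟩ := (hD_cpt α hα0).elim_finite_subcover U hUopen hcov
  have hz0K : z0 ∈ {z | α ≤ D z} := by
    simp only [Set.mem_setOf_eq, hz0']; linarith
  have htne : t.Nonempty := by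
    obtain ⟨i, hi, -⟩ := Set.mem_iUnion₂.1 (ht hz0K)
    exact ⟨i, hi⟩
  obtain ⟨j, hjt, hjmin⟩ := t.exists_min_image (fun i => i.1) htne
  refine ⟨α + j.1, by linarith [j.2.1], j.2.2, ?_⟩
  intro x hx
  obtain ⟨i, hit, hxi⟩ := Set.mem_iUnion₂.1 (ht hx)
  have hsub : {z | α + i.1 ≤ D z} ⊆ {z | α + j.1 ≤ D z} := by
    intro w hw
    have := hjmin i hit
    simp only [Set.mem_setOf_eq] at hw ⊢; linarith
  have hine : {z | α + i.1 ≤ D z}.Nonempty :=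
    ⟨z0, by simp only [Set.mem_setOf_eq, hz0']; linarith [i.2.2]⟩
  exact le_of_lt (lt_of_le_of_lt (infDist_le_infDist_of_subset hsub hine) hxi)

private lemma depth_left_cont (D : E → ℝ) (αmax : ℝ)
    (hD_cpt : ∀ α : ℝ, 0 < α → IsCompact {z | α ≤ D z})
    (hmax : IsGreatest (Set.range D) αmax)
    (α : ℝ) (hα0 : 0 < α) (hαm : α < αmax) (ε : ℝ) (hε : 0 < ε) :
    ∃ β : ℝ, 0 < β ∧ β < α ∧ ∀ x ∈ {z | β ≤ D z}, infDist x {z | α ≤ D z} ≤ ε := by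
  obtain ⟨z0, hz0⟩ := hmax.1
  have hz0' : D z0 = αmax := hz0
  set V : Set E := {x | infDist x {z | α ≤ D z} < ε} with hV
  have hVopen : IsOpen V := isOpen_lt (continuous_infDist_pt _) continuous_const
  have hthr : ∀ k : ℕ, α / 2 ≤ α - α / (2 * (k + 1)) := by
    intro k
    have h1 : α / (2 * ((k:ℝ) + 1)) ≤ α / 2 := by
      apply div_le_div_of_nonneg_left hα0.le (by norm_num)
      have : (0:ℝ) ≤ (k:ℝ) := Nat.cast_nonneg k
      linarith
    linarith
  have hthr0 : ∀ k : ℕ, 0 < α - α / (2 * (k + 1)) := fun k => lt_of_lt_of_le (by linarith) (hthr k)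
  set Z : ℕ → Set E := fun k => {z | α - α / (2 * (k + 1)) ≤ D z} ∩ Vᶜ with hZ
  have hZclosed : ∀ k, IsClosed (Z k) :=
    fun k => ((hD_cpt _ (hthr0 k)).isClosed).inter hVopen.isClosed_compl
  have hempty : {z | α / 2 ≤ D z} ∩ ⋂ k, Z k = ∅ := by
    rw [Set.eq_empty_iff_forall_notMem]
    rintro x ⟨-, hxZ⟩
    have hxZ' : ∀ k : ℕ, α - α / (2 * (k + 1)) ≤ D x ∧ x ∉ V := by
      intro k
      have := Set.mem_iInter.1 hxZ k
      exact ⟨this.1, this.2⟩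
    have hDx : α ≤ D x := by
      by_contra hlt
      push_neg at hlt
      set c := α - D x with hc
      have hc0 : 0 < c := by simp only [hc]; linarith
      obtain ⟨k, hk⟩ := exists_nat_gt (α / (2 * c))
      have hk1 : α / (2 * c) < (k:ℝ) + 1 := lt_of_lt_of_le hk (by linarith)
      have h2 : α < 2 * c * ((k:ℝ) + 1) := by
        rw [div_lt_iff₀ (by positivity)] at hk1; linarith
      have h3 : α / (2 * ((k:ℝ) + 1)) < c := by
        rw [div_lt_iff₀ (by positivity)]; linarith
      have := (hxZ' k).1
      simp only [hc] at h3
      linarith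
    have hxV : x ∈ V := by
      have : infDist x {z | α ≤ D z} = 0 := infDist_zero_of_mem hDx
      simp only [hV, Set.mem_setOf_eq, this]; exact hε
    exact (hxZ' 0).2 hxV
  obtain ⟨t, ht⟩ := (hD_cpt (α/2) (by linarith)).elim_finite_subfamily_closed Z hZclosed hempty
  have hz0s : z0 ∈ {z | α / 2 ≤ D z} := by
    simp only [Set.mem_setOf_eq, hz0']; linarith
  have htne : t.Nonempty := by
    rcases t.eq_empty_or_nonempty with h | h
    · exfalso
      rw [h] at ht
      simp only [Finset.notMem_empty, Set.iInter_of_empty, Set.iInter_univ,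
        Set.inter_univ] at ht
      exact Set.eq_empty_iff_forall_notMem.1 ht z0 hz0s
    · exact h
  set k0 := t.max' htne with hk0
  refine ⟨α - α / (2 * (k0 + 1)), hthr0 k0, by
    have : 0 < α / (2 * ((k0:ℝ) + 1)) := by positivity
    linarith, ?_⟩
  intro x hx
  have hxs : x ∈ {z | α / 2 ≤ D z} := le_trans (hthr k0) hx
  have hxV : x ∈ V := by
    by_contra hxV
    have hxmem : x ∈ {z | α / 2 ≤ D z} ∩ ⋂ k ∈ t, Z k := by
      refine ⟨hxs, Set.mem_iInter₂.2 fun k hk => ⟨?_, hxV⟩⟩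
      have hkk0 : (k:ℝ) ≤ (k0:ℝ) := Nat.cast_le.2 (t.le_max' k hk)
      have h1 : α / (2 * ((k0:ℝ) + 1)) ≤ α / (2 * ((k:ℝ) + 1)) := by
        apply div_le_div_of_nonneg_left hα0.le (by positivity)
        linarith
      have hx' : α - α / (2 * ((k0:ℝ) + 1)) ≤ D x := hx
      simp only [Set.mem_setOf_eq]
      linarith
    rw [ht] at hxmem
    exact hxmem
  exact le_of_lt hxV

private lemma depth_sandwich (D : E → ℝ) (αmax : ℝ)
    (hD_cpt : ∀ α : ℝ, 0 < α → IsCompact {z | α ≤ D z})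
    (hmax : IsGreatest (Set.range D) αmax)
    (hsm : ∀ α : ℝ, 0 < α → α < αmax → {z | α ≤ D z} = closure {z | α < D z})
    (α : ℝ) (hα0 : 0 < α) (hαm : α < αmax) (ε : ℝ) (hε : 0 < ε) :
    ∃ q : ℝ × ℝ, 0 < q.1 ∧ q.1 < α ∧ α < q.2 ∧ q.2 < αmax ∧
      ∀ x ∈ {z | q.1 ≤ D z}, infDist x {z | q.2 ≤ D z} ≤ ε := by
  obtain ⟨βp, hβp1, hβp2, hβp3⟩ :=
    depth_right_cont D αmax hD_cpt hmax hsm α hα0 hαm (ε/2) (by linarith)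
  obtain ⟨βm, hβm1, hβm2, hβm3⟩ :=
    depth_left_cont D αmax hD_cpt hmax α hα0 hαm (ε/2) (by linarith)
  obtain ⟨z0, hz0⟩ := hmax.1
  have hz0' : D z0 = αmax := hz0
  refine ⟨(βm, βp), hβm1, hβm2, hβp1, hβp2, ?_⟩
  intro x hx
  have h1 : infDist x {z | α ≤ D z} ≤ ε / 2 := hβm3 x hx
  have hSne : {z | α ≤ D z}.Nonempty :=
    ⟨z0, by simp only [Set.mem_setOf_eq, hz0']; linarith⟩
  obtain ⟨y, hy, hyd⟩ := (hD_cpt α hα0).exists_infDist_eq_dist hSne x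
  have h2 : infDist y {z | βp ≤ D z} ≤ ε / 2 := hβp3 y hy
  have h3 : infDist x {z | βp ≤ D z} ≤ infDist y {z | βp ≤ D z} + dist x y :=
    infDist_le_infDist_add_dist
  rw [← hyd] at h3
  linarith

end Aux

/-- For depth functions with `D` strictly monotone, pointwise Hausdorff convergence of
the trimmed regions on `(0, αmax)` is equivalent to compact Hausdorff convergence on
every compact interval of `(0, αmax)`. -/
theorem pointwise_iff_compact_region_convergence {d : ℕ}
    (Dn : ℕ → EuclideanSpace ℝ (Fin d) → ℝ) (D : EuclideanSpace ℝ (Fin d) → ℝ)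
    (hDn_nn : ∀ n z, 0 ≤ Dn n z) (hD_nn : ∀ z, 0 ≤ D z)
    (hDn_cpt : ∀ n, ∀ α : ℝ, 0 < α → IsCompact {z | α ≤ Dn n z})
    (hD_cpt : ∀ α : ℝ, 0 < α → IsCompact {z | α ≤ D z})
    (αmax : ℝ) (hmax : IsGreatest (Set.range D) αmax)
    (hsm : ∀ α : ℝ, 0 < α → α < αmax → {z | α ≤ D z} = closure {z | α < D z})
    (hne : ∀ α : ℝ, 0 < α → α < αmax →
      ∀ᶠ n in atTop, {z | α ≤ Dn n z}.Nonempty) :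
    (∀ α : ℝ, 0 < α → α < αmax →
        Tendsto (fun n => hausdorffDist {z | α ≤ Dn n z} {z | α ≤ D z}) atTop (nhds 0))
      ↔ (∀ a b : ℝ, 0 < a → b < αmax → ∀ ε : ℝ, 0 < ε → ∃ N, ∀ n ≥ N,
          ∀ α ∈ Set.Icc a b,
            hausdorffDist {z | α ≤ Dn n z} {z | α ≤ D z} < ε) := by
  obtain ⟨z0, hz0⟩ := hmax.1
  have hz0' : D z0 = αmax := hz0
  constructor
  · intro hpt a b ha hb ε hε
    rcases le_or_gt a b with hab | hab
    swap
    · exact ⟨0, fun n _ α hα => absurd (hα.1.trans hα.2) (not_le.2 hab)⟩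
    -- sandwich data for each α in [a,b]
    have key : ∀ α ∈ Set.Icc a b, ∃ q : ℝ × ℝ, 0 < q.1 ∧ q.1 < α ∧ α < q.2 ∧ q.2 < αmax ∧
        ∀ x ∈ {z | q.1 ≤ D z}, infDist x {z | q.2 ≤ D z} ≤ ε / 3 := by
      intro α hα
      exact depth_sandwich D αmax hD_cpt hmax hsm α (lt_of_lt_of_le ha hα.1)
        (lt_of_le_of_lt hα.2 hb) (ε/3) (by linarith)
    choose q hq1 hq2 hq3 hq4 hq5 using key
    set U : (Set.Icc a b) → Set ℝ := fun i => Set.Ioo (q i.1 i.2).1 (q i.1 i.2).2 with hU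
    have hcov : Set.Icc a b ⊆ ⋃ i, U i := by
      intro α hα
      exact Set.mem_iUnion.2 ⟨⟨α, hα⟩, hq2 α hα, hq3 α hα⟩
    obtain ⟨t, ht⟩ := isCompact_Icc.elim_finite_subcover U (fun _ => isOpen_Ioo) hcov
    have hev : ∀ᶠ n in atTop, ∀ i ∈ t,
        hausdorffDist {z | (q i.1 i.2).1 ≤ Dn n z} {z | (q i.1 i.2).1 ≤ D z} < ε / 3 ∧
        hausdorffDist {z | (q i.1 i.2).2 ≤ Dn n z} {z | (q i.1 i.2).2 ≤ D z} < ε / 3 ∧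
        {z | (q i.1 i.2).1 ≤ Dn n z}.Nonempty ∧ {z | (q i.1 i.2).2 ≤ Dn n z}.Nonempty := by
      rw [eventually_all_finset]
      intro i _
      have hm0 : 0 < (q i.1 i.2).1 := hq1 i.1 i.2
      have hmM : (q i.1 i.2).1 < αmax :=
        lt_trans (hq2 i.1 i.2) (lt_of_le_of_lt i.2.2 hb)
      have hp0 : 0 < (q i.1 i.2).2 :=
        lt_trans (lt_of_lt_of_le ha i.2.1) (hq3 i.1 i.2)
      have hpM : (q i.1 i.2).2 < αmax := hq4 i.1 i.2
      exact ((hpt _ hm0 hmM).eventually_lt_const (by linarith)).and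
        (((hpt _ hp0 hpM).eventually_lt_const (by linarith)).and
          ((hne _ hm0 hmM).and (hne _ hp0 hpM)))
    obtain ⟨N, hN⟩ := eventually_atTop.1 hev
    refine ⟨N, fun n hn α hα => ?_⟩
    obtain ⟨i, hit, hαi⟩ := Set.mem_iUnion₂.1 (ht hα)
    obtain ⟨hH1, hH2, hne1, hne2⟩ := hN n hn i hit
    set βm := (q i.1 i.2).1 with hβm
    set βp := (q i.1 i.2).2 with hβp
    have hβm0 : 0 < βm := hq1 i.1 i.2
    have hβp0 : 0 < βp := lt_trans (lt_of_lt_of_le ha i.2.1) (hq3 i.1 i.2)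
    have hβmα : βm < α := hαi.1
    have hαβp : α < βp := hαi.2
    have hα0 : 0 < α := lt_of_lt_of_le ha hα.1
    -- the six sets
    set A := {z | α ≤ Dn n z} with hA
    set S := {z | α ≤ D z} with hS
    set Bm := {z | βm ≤ Dn n z} with hBm
    set Bp := {z | βp ≤ Dn n z} with hBp
    set Cm := {z | βm ≤ D z} with hCm
    set Cp := {z | βp ≤ D z} with hCp
    have hCmne : Cm.Nonempty := ⟨z0, by
      simp only [hCm, Set.mem_setOf_eq, hz0']
      linarith [lt_trans (hq2 i.1 i.2) (lt_of_le_of_lt i.2.2 hb)]⟩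
    have hCpne : Cp.Nonempty := ⟨z0, by
      simp only [hCp, Set.mem_setOf_eq, hz0']
      linarith [hq4 i.1 i.2]⟩
    have hsand : ∀ x ∈ Cm, infDist x Cp ≤ ε / 3 := hq5 i.1 i.2
    have hfin1 : EMetric.hausdorffEdist Bm Cm ≠ ⊤ :=
      hausdorffEdist_ne_top_of_nonempty_of_bounded hne1 hCmne
        ((hDn_cpt n βm hβm0).isBounded) ((hD_cpt βm hβm0).isBounded)
    have hfin2 : EMetric.hausdorffEdist Cp Bp ≠ ⊤ :=
      hausdorffEdist_ne_top_of_nonempty_of_bounded hCpne hne2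
        ((hD_cpt βp hβp0).isBounded) ((hDn_cpt n βp hβp0).isBounded)
    have hCpS : Cp ⊆ S := fun w hw => le_trans hαβp.le hw
    have hBpA : Bp ⊆ A := fun w hw => le_trans hαβp.le hw
    have hABm : A ⊆ Bm := fun w hw => le_trans hβmα.le hw
    have hSCm : S ⊆ Cm := fun w hw => le_trans hβmα.le hw
    have bound1 : ∀ x ∈ A, infDist x S ≤ ε / 3 + ε / 3 := by
      intro x hx
      have h1 : infDist x Cm < ε / 3 :=
        lt_of_le_of_lt (infDist_le_hausdorffDist_of_mem (hABm hx) hfin1) hH1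
      obtain ⟨y, hyCm, hyd⟩ := (hD_cpt βm hβm0).exists_infDist_eq_dist hCmne x
      have h2 : infDist x Cp ≤ infDist y Cp + dist x y := infDist_le_infDist_add_dist
      have h3 : infDist y Cp ≤ ε / 3 := hsand y hyCm
      have h4 : infDist x S ≤ infDist x Cp := infDist_le_infDist_of_subset hCpS hCpne
      rw [← hyd] at h2
      linarith
    have bound2 : ∀ x ∈ S, infDist x A ≤ ε / 3 + ε / 3 := by
      intro x hx
      have h1 : infDist x Cp ≤ ε / 3 := hsand x (hSCm hx)
      obtain ⟨y, hyCp, hyd⟩ := (hD_cpt βp hβp0).exists_infDist_eq_dist hCpne x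
      have h2 : infDist y Bp ≤ hausdorffDist Cp Bp :=
        infDist_le_hausdorffDist_of_mem hyCp hfin2
      have h2' : hausdorffDist Cp Bp < ε / 3 := by
        rw [hausdorffDist_comm]; exact hH2
      have h3 : infDist x Bp ≤ infDist y Bp + dist x y := infDist_le_infDist_add_dist
      have h4 : infDist x A ≤ infDist x Bp := infDist_le_infDist_of_subset hBpA hne2
      rw [← hyd] at h3
      linarith
    calc hausdorffDist A S ≤ ε / 3 + ε / 3 :=
          hausdorffDist_le_of_infDist (by linarith) bound1 bound2
      _ < ε := by linarith
  · intro h α hα0 hαm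
    rw [Metric.tendsto_atTop]
    intro ε hε
    obtain ⟨N, hN⟩ := h α α hα0 hαm ε hε
    refine ⟨N, fun n hn => ?_⟩
    have := hN n hn α ⟨le_refl α, le_refl α⟩
    rw [Real.dist_eq, sub_zero, abs_of_nonneg hausdorffDist_nonneg]
    exact this
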